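/- Let f: R^d → R be L-smooth, bounded below by f*, and consider DP-SGD iterates x_{t+1} = x_t − α_t g_t^{DP} where E_t‖g_t^{DP}‖² ≤ q²(1 + dσ²) and −E_t⟨∇f(x_t), g_t^{DP}⟩ ≤ −(1−η_t)‖∇f(x_t)‖² − D η_t q ‖∇f(x_t)‖ with η_t ∈ [0,1], D > 0. If {α_t} is positive decreasing with ∑ α_t² < ∞ and ∑_{t≥2} α_t/(∑_{i<t} α_i) = ∞, then almost surely min_{1≤i≤t} [(1−η_i)‖∇f(x_i)‖² + D η_i q ‖∇f(x_i)‖] = o(1/∑_{i=1}^{t-1} α_i). -/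

import Mathlib

open MeasureTheory Filter RealInnerProductSpace


theorem descent_lemma' {E : Type*} [NormedAddCommGroup E] [InnerProductSpace ℝ E]
    [CompleteSpace E]
    (f : E → ℝ) (f' : E → E) (L : ℝ) (hL : 0 ≤ L)
    (hgrad : ∀ y, HasGradientAt f (f' y) y)
    (hlip : LipschitzWith (Real.toNNReal L) f') (x y : E) :
    f y ≤ f x + ⟪f' x, y - x⟫ + L / 2 * ‖y - x‖ ^ 2 := by
  set v := y - x with hv
  have hline : ∀ s : ℝ, HasDerivAt (fun s : ℝ => f (x + s • v)) ⟪f' (x + s • v), v⟫ s := by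
    intro s
    have hc : HasDerivAt (fun s : ℝ => x + s • v) v s := by
      simpa using ((hasDerivAt_id s).smul_const v).const_add x
    have := ((hgrad (x + s • v)).hasFDerivAt.comp_hasDerivAt s hc)
    exact this
  set φ : ℝ → ℝ := fun s => f (x + s • v) - s * ⟪f' x, v⟫ - L * s ^ 2 / 2 * ‖v‖ ^ 2 with hφ
  have hφd : ∀ s : ℝ, HasDerivAt φ (⟪f' (x + s • v), v⟫ - ⟪f' x, v⟫ - L * s * ‖v‖ ^ 2) s := by
    intro s
    have h1 : HasDerivAt (fun s : ℝ => s * ⟪f' x, v⟫) ⟪f' x, v⟫ s := by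
      simpa using (hasDerivAt_id s).mul_const ⟪f' x, v⟫
    have h2 : HasDerivAt (fun s : ℝ => L * s ^ 2 / 2 * ‖v‖ ^ 2) (L * s * ‖v‖ ^ 2) s := by
      have : HasDerivAt (fun s : ℝ => s ^ 2) (2 * s) s := by
        simpa using hasDerivAt_pow 2 s
      have := ((this.const_mul L).div_const 2).mul_const (‖v‖ ^ 2)
      exact this.congr_deriv (by ring)
    exact ((hline s).sub h1).sub h2
  have hmono : AntitoneOn φ (Set.Icc 0 1) := by
    apply antitoneOn_of_deriv_nonpos (convex_Icc 0 1)
    · exact (Differentiable.continuous fun s => (hφd s).differentiableAt).continuousOn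
    · intro s hs
      exact (hφd s).differentiableAt.differentiableWithinAt
    · intro s hs
      rw [(hφd s).deriv]
      have hs' : 0 ≤ s := (Set.mem_Ioo.mp (by simpa using hs)).1.le
      have key : ⟪f' (x + s • v), v⟫ - ⟪f' x, v⟫ ≤ L * s * ‖v‖ ^ 2 := by
        have h1 : ⟪f' (x + s • v) - f' x, v⟫ ≤ ‖f' (x + s • v) - f' x‖ * ‖v‖ :=
          real_inner_le_norm _ _
        have h2 : ‖f' (x + s • v) - f' x‖ ≤ L * (s * ‖v‖) := by
          have := hlip.dist_le_mul (x + s • v) x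
          rw [dist_eq_norm] at this
          simpa [norm_smul, abs_of_nonneg hs', Real.coe_toNNReal _ hL, mul_assoc] using this
        calc ⟪f' (x + s • v), v⟫ - ⟪f' x, v⟫ = ⟪f' (x + s • v) - f' x, v⟫ := by
              rw [inner_sub_left]
          _ ≤ ‖f' (x + s • v) - f' x‖ * ‖v‖ := h1
          _ ≤ L * (s * ‖v‖) * ‖v‖ := by
              exact mul_le_mul_of_nonneg_right h2 (norm_nonneg _)
          _ = L * s * ‖v‖ ^ 2 := by ring
      linarith
  have h10 := hmono (Set.left_mem_Icc.mpr zero_le_one) (Set.right_mem_Icc.mpr zero_le_one)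
    zero_le_one
  have h0 : φ 0 = f x := by simp [hφ]
  have h1 : φ 1 = f y - ⟪f' x, v⟫ - L / 2 * ‖v‖ ^ 2 := by
    have hyx : x + (1 : ℝ) • v = y := by rw [hv]; simp
    simp only [hφ, hyx]
    ring
  rw [h0, h1] at h10
  linarith


theorem det_min' (α b : ℕ → ℝ) (hαpos : ∀ t, 0 < α t) (hb : ∀ t, 0 ≤ b t)
    (hαns : ¬ Summable α) (hsum : Summable fun t => α t * b t) :
    Tendsto (fun t => (∑ i ∈ Finset.range t, α i) *
      (Finset.range (t + 1)).inf' Finset.nonempty_range_add_one b) atTop (nhds 0) := by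
  set m : ℕ → ℝ := fun t => (Finset.range (t + 1)).inf' Finset.nonempty_range_add_one b with hm
  have hm_le : ∀ i t, i ≤ t → m t ≤ b i := fun i t hit =>
    Finset.inf'_le b (Finset.mem_range.mpr (Nat.lt_succ_of_le hit))
  have hm_nonneg : ∀ t, 0 ≤ m t := fun t =>
    Finset.le_inf' _ _ (fun i _ => hb i)
  have hm_anti : Antitone m := by
    intro s t hst
    exact Finset.le_inf' _ _ (fun i hi =>
      hm_le i t (le_trans (Nat.lt_succ_iff.mp (Finset.mem_range.mp hi)) hst))
  have hm0 : Tendsto m atTop (nhds 0) := by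
    rw [Metric.tendsto_atTop]
    intro ε hε
    by_contra hcon
    push_neg at hcon
    have hkey : ∀ T, ∃ t ≥ T, ε ≤ m t := by
      intro T
      obtain ⟨t, ht, hd⟩ := hcon T
      refine ⟨t, ht, ?_⟩
      rw [Real.dist_eq, sub_zero, abs_of_nonneg (hm_nonneg t)] at hd
      linarith
    have hball : ∀ i, ε ≤ b i := by
      intro i
      obtain ⟨t, ht, hεm⟩ := hkey i
      exact le_trans hεm (hm_le i t ht)
    have hcomp : Summable (fun i => α i * ε) :=
      hsum.of_nonneg_of_le (fun i => mul_nonneg (hαpos i).le hε.le)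
        (fun i => mul_le_mul_of_nonneg_left (hball i) (hαpos i).le)
    have : Summable α := by
      have := hcomp.div_const ε
      simpa [mul_div_assoc, div_self hε.ne'] using this
    exact hαns this
  rw [Metric.tendsto_atTop]
  intro ε hε
  -- tail of the summable series
  have htail : Tendsto (fun T => ∑' k, α (k + T) * b (k + T)) atTop (nhds 0) :=
    tendsto_sum_nat_add (fun n => α n * b n)
  have hε2 : 0 < ε / 2 := by linarith
  obtain ⟨T, hT⟩ := (Metric.tendsto_atTop.mp htail (ε / 2) hε2) -- hT : ∀ n ≥ T, dist .. < ε/2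
  have htails : Summable fun k => α (k + T) * b (k + T) := (summable_nat_add_iff T).mpr hsum
  have htailbound : ∑' k, α (k + T) * b (k + T) < ε / 2 := by
    have := hT T le_rfl
    rw [Real.dist_eq, sub_zero] at this
    calc ∑' k, α (k + T) * b (k + T) ≤ |∑' k, α (k + T) * b (k + T)| := le_abs_self _
      _ < ε / 2 := this
  set A : ℝ := ∑ i ∈ Finset.range T, α i with hA
  have hA0 : 0 ≤ A := Finset.sum_nonneg (fun i _ => (hαpos i).le)
  have hsm : ∀ᶠ t in atTop, m t < ε / (2 * (A + 1)) := by
    have : (0:ℝ) < ε / (2 * (A + 1)) := by positivity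
    exact hm0.eventually (eventually_lt_nhds this)
  obtain ⟨T2, hT2⟩ := (hsm.and (eventually_ge_atTop T)).exists_forall_of_atTop
  refine ⟨T2, fun t ht => ?_⟩
  obtain ⟨hmt, hTt⟩ := hT2 t ht
  have hsplit : ∑ i ∈ Finset.range t, α i = A + ∑ i ∈ Finset.Ico T t, α i := by
    simp only [hA, Finset.range_eq_Ico]
    exact (Finset.sum_Ico_consecutive _ (Nat.zero_le T) hTt).symm
  have h1 : A * m t < ε / 2 := by
    have h1' : A * m t ≤ A * (ε / (2 * (A + 1))) :=
      mul_le_mul_of_nonneg_left hmt.le hA0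
    have h2' : A * (ε / (2 * (A + 1))) < ε / 2 := by
      have ha : A * (ε / (2 * (A + 1))) < (A + 1) * (ε / (2 * (A + 1))) :=
        mul_lt_mul_of_pos_right (by linarith) (by positivity)
      have hb' : (A + 1) * (ε / (2 * (A + 1))) = ε / 2 := by
        field_simp
      linarith
    linarith
  have h2 : (∑ i ∈ Finset.Ico T t, α i) * m t ≤ ∑' k, α (k + T) * b (k + T) := by
    have hle : (∑ i ∈ Finset.Ico T t, α i) * m t ≤ ∑ i ∈ Finset.Ico T t, α i * b i := by
      rw [Finset.sum_mul]
      refine Finset.sum_le_sum (fun i hi => ?_)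
      obtain ⟨hTi, hit⟩ := Finset.mem_Ico.mp hi
      exact mul_le_mul_of_nonneg_left
        (le_trans (hm_anti hit.le) (hm_le i i le_rfl)) (hαpos i).le
    refine le_trans hle ?_
    rw [Finset.sum_Ico_eq_sum_range]
    have : ∀ i, α (T + i) * b (T + i) = α (i + T) * b (i + T) := by
      intro i; rw [Nat.add_comm]
    simp_rw [this]
    exact Summable.sum_le_tsum _ (fun k _ => mul_nonneg (hαpos _).le (hb _)) htails
  have hnn : 0 ≤ (∑ i ∈ Finset.range t, α i) * m t :=
    mul_nonneg (Finset.sum_nonneg fun i _ => (hαpos i).le) (hm_nonneg t)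
  rw [Real.dist_eq, sub_zero, abs_of_nonneg hnn, hsplit, add_mul]
  linarith

/-- almost sure convergence rate of DP-SGD (non-convex case).
Almost surely, `min_{1≤i≤t} [(1−η_i)‖∇f(x_i)‖² + D η_i q ‖∇f(x_i)‖]`
is `o(1/∑_{i<t} α_i)`. -/
theorem dp_sgd_convergence
    {Ω : Type*} {m0 : MeasurableSpace Ω} {P : Measure Ω} [IsProbabilityMeasure P]
    {d : ℕ} (ℱ : Filtration ℕ m0)
    (f : EuclideanSpace ℝ (Fin d) → ℝ)
    (f' : EuclideanSpace ℝ (Fin d) → EuclideanSpace ℝ (Fin d))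
    (L fstar q D σ2 : ℝ) (hL : 0 < L) (hq : 0 < q) (hD : 0 < D) (hσ2 : 0 ≤ σ2)
    (hgrad : ∀ y, HasGradientAt f (f' y) y)
    (hlip : LipschitzWith (Real.toNNReal L) f')
    (hbdd : ∀ y, fstar ≤ f y)
    (x gDP : ℕ → Ω → EuclideanSpace ℝ (Fin d)) (η : ℕ → Ω → ℝ) (α : ℕ → ℝ)
    (hxadp : Adapted ℱ x) (hηadp : Adapted ℱ η)
    (hη01 : ∀ t ω, 0 ≤ η t ω ∧ η t ω ≤ 1)
    (hfint : ∀ t, Integrable (fun ω => f (x t ω)) P)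
    (hg2int : ∀ t, Integrable (fun ω => ‖gDP t ω‖ ^ 2) P)
    (hinnerint : ∀ t, Integrable (fun ω => ⟪f' (x t ω), gDP t ω⟫) P)
    (hrec : ∀ t ω, x (t + 1) ω = x t ω - α t • gDP t ω)
    (hg2 : ∀ t, ∀ᵐ ω ∂P,
      (P[fun ω => ‖gDP t ω‖ ^ 2 | ℱ t]) ω ≤ q ^ 2 * (1 + d * σ2))
    (hinner : ∀ t, ∀ᵐ ω ∂P,
      (P[fun ω => -⟪f' (x t ω), gDP t ω⟫ | ℱ t]) ω ≤
        -((1 - η t ω) * ‖f' (x t ω)‖ ^ 2 + D * η t ω * q * ‖f' (x t ω)‖))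
    (hαpos : ∀ t, 0 < α t) (hαmono : Antitone α)
    (hα2 : Summable fun t => α t ^ 2)
    (hαdiv : ¬ Summable fun t => α (t + 1) / ∑ i ∈ Finset.range (t + 1), α i) :
    ∀ᵐ ω ∂P,
      Tendsto
        (fun t => (∑ i ∈ Finset.range t, α i) *
          (Finset.range (t + 1)).inf' Finset.nonempty_range_add_one
            (fun i => (1 - η i ω) * ‖f' (x i ω)‖ ^ 2 +
              D * η i ω * q * ‖f' (x i ω)‖))
        atTop (nhds 0) := by
  -- α is not summable
  have hαns : ¬ Summable α := by
    intro hs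
    apply hαdiv
    have hA0 : ∀ t, α 0 ≤ ∑ i ∈ Finset.range (t + 1), α i := by
      intro t
      exact Finset.single_le_sum (f := α) (fun i _ => (hαpos i).le)
        (Finset.mem_range.mpr (Nat.succ_pos t))
    refine Summable.of_nonneg_of_le
      (fun t => div_nonneg (hαpos _).le (Finset.sum_nonneg fun i _ => (hαpos i).le))
      (fun t => div_le_div_of_nonneg_left (hαpos (t + 1)).le (hαpos 0) (hA0 t))
      ?_
    exact ((summable_nat_add_iff 1).mpr hs).div_const (α 0)
  set C : ℝ := q ^ 2 * (1 + d * σ2) with hC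
  have hC0 : 0 ≤ C := by positivity
  set h : ℕ → Ω → ℝ := fun t ω => (1 - η t ω) * ‖f' (x t ω)‖ ^ 2 +
      D * η t ω * q * ‖f' (x t ω)‖ with hh
  have hh_nonneg : ∀ t ω, 0 ≤ h t ω := by
    intro t ω
    have h1 := (hη01 t ω).1
    have h2 := (hη01 t ω).2
    have h3 := sq_nonneg ‖f' (x t ω)‖
    have h4 := norm_nonneg (f' (x t ω))
    have h5 : 0 ≤ (1 - η t ω) * ‖f' (x t ω)‖ ^ 2 := mul_nonneg (by linarith) h3
    have h6 : 0 ≤ D * η t ω * q * ‖f' (x t ω)‖ := by positivity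
    simp only [hh]
    linarith
  have hxm : ∀ t, Measurable (x t) := fun t => (hxadp t).mono (ℱ.le t) le_rfl
  have hηm : ∀ t, Measurable (η t) := fun t => (hηadp t).mono (ℱ.le t) le_rfl
  have hnm : ∀ t, Measurable (fun ω => ‖f' (x t ω)‖) := fun t =>
    (continuous_norm.comp hlip.continuous).measurable.comp (hxm t)
  have hh_meas : ∀ t, Measurable (h t) := by
    intro t
    simp only [hh]
    exact (((measurable_const.sub (hηm t)).mul ((hnm t).pow measurable_const)).add
      ((((measurable_const.mul (hηm t)).mul measurable_const)).mul (hnm t)))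
  -- integrability of h t
  have hhint : ∀ t, Integrable (h t) P := by
    intro t
    refine Integrable.mono (integrable_condExp (m := ℱ t)
      (f := fun ω => -⟪f' (x t ω), gDP t ω⟫)) (hh_meas t).aestronglyMeasurable ?_
    filter_upwards [hinner t] with ω hω
    rw [Real.norm_eq_abs, Real.norm_eq_abs, abs_of_nonneg (hh_nonneg t ω)]
    have : h t ω ≤ -((P[fun ω => -⟪f' (x t ω), gDP t ω⟫|ℱ t]) ω) := by
      simp only [hh]; linarith
    exact this.trans (neg_le_abs _)
  -- ∫ h t ≤ ∫ ⟪f'(x t), gDP t⟫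
  have hIh : ∀ t, ∫ ω, h t ω ∂P ≤ ∫ ω, ⟪f' (x t ω), gDP t ω⟫ ∂P := by
    intro t
    have hmono := integral_mono_ae (hhint t)
      (integrable_condExp (m := ℱ t) (f := fun ω => -⟪f' (x t ω), gDP t ω⟫)).neg
      (by filter_upwards [hinner t] with ω hω
          simp only [Pi.neg_apply, hh]; linarith)
    simp only [Pi.neg_apply] at hmono
    rw [integral_neg, integral_condExp (ℱ.le t), integral_neg, neg_neg] at hmono
    exact hmono
  -- ∫ ‖gDP t‖² ≤ C
  have hIg : ∀ t, ∫ ω, ‖gDP t ω‖ ^ 2 ∂P ≤ C := by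
    intro t
    have hmono := integral_mono_ae
      (integrable_condExp (m := ℱ t) (f := fun ω => ‖gDP t ω‖ ^ 2))
      (integrable_const C) (hg2 t)
    rw [integral_condExp (ℱ.le t), integral_const] at hmono
    simpa using hmono
  -- pointwise descent inequality
  have hdesc : ∀ t ω, f (x (t + 1) ω) ≤ f (x t ω) - α t * ⟪f' (x t ω), gDP t ω⟫ +
      L / 2 * (α t ^ 2 * ‖gDP t ω‖ ^ 2) := by
    intro t ω
    have key := descent_lemma' f f' L hL.le hgrad hlip (x t ω) (x (t + 1) ω)
    have hxy : x (t + 1) ω - x t ω = -(α t • gDP t ω) := by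
      rw [hrec t ω]; abel
    rw [hxy, inner_neg_right, real_inner_smul_right, norm_neg, norm_smul] at key
    have hns : (‖α t‖ * ‖gDP t ω‖) ^ 2 = α t ^ 2 * ‖gDP t ω‖ ^ 2 := by
      rw [mul_pow, Real.norm_eq_abs, sq_abs]
    rw [hns] at key
    linarith
  -- main descent in expectation
  have hmain : ∀ t, α t * ∫ ω, h t ω ∂P ≤
      (∫ ω, f (x t ω) ∂P) - (∫ ω, f (x (t + 1) ω) ∂P) + L / 2 * C * α t ^ 2 := by
    intro t
    have hint0 : Integrable (fun ω => α t * ⟪f' (x t ω), gDP t ω⟫) P :=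
      (hinnerint t).const_mul (α t)
    have hint1 : Integrable (fun ω => f (x t ω) - α t * ⟪f' (x t ω), gDP t ω⟫) P :=
      (hfint t).sub hint0
    have hint2 : Integrable (fun ω => L / 2 * (α t ^ 2 * ‖gDP t ω‖ ^ 2)) P :=
      ((hg2int t).const_mul (α t ^ 2)).const_mul (L / 2)
    have hRint : Integrable (fun ω => f (x t ω) - α t * ⟪f' (x t ω), gDP t ω⟫ +
        L / 2 * (α t ^ 2 * ‖gDP t ω‖ ^ 2)) P := hint1.add hint2
    have hstep := integral_mono (hfint (t + 1)) hRint (fun ω => hdesc t ω)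
    rw [integral_add hint1 hint2, integral_sub (hfint t) hint0,
      integral_const_mul, integral_const_mul] at hstep
    rw [integral_const_mul] at hstep
    have h1 : α t * ∫ ω, h t ω ∂P ≤ α t * ∫ ω, ⟪f' (x t ω), gDP t ω⟫ ∂P :=
      mul_le_mul_of_nonneg_left (hIh t) (hαpos t).le
    have h2 : L / 2 * (α t ^ 2 * ∫ ω, ‖gDP t ω‖ ^ 2 ∂P) ≤ L / 2 * (α t ^ 2 * C) := by
      have := mul_le_mul_of_nonneg_left (hIg t) (sq_nonneg (α t))
      nlinarith [this]
    nlinarith [hstep, h1, h2]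
  -- summability of expected values
  have hInn : ∀ t, 0 ≤ ∫ ω, h t ω ∂P := fun t => integral_nonneg (fun ω => hh_nonneg t ω)
  have hsumI : Summable (fun t => α t * ∫ ω, h t ω ∂P) := by
    apply summable_of_sum_range_le (c := (∫ ω, f (x 0 ω) ∂P) - fstar + L / 2 * C * ∑' t, α t ^ 2)
      (fun t => mul_nonneg (hαpos t).le (hInn t))
    intro n
    have htel : ∑ t ∈ Finset.range n, ((∫ ω, f (x t ω) ∂P) - (∫ ω, f (x (t + 1) ω) ∂P)) =
        (∫ ω, f (x 0 ω) ∂P) - (∫ ω, f (x n ω) ∂P) := Finset.sum_range_sub' _ n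
    have hfn : fstar ≤ ∫ ω, f (x n ω) ∂P := by
      have := integral_mono (integrable_const fstar) (hfint n) (fun ω => hbdd (x n ω))
      simpa using this
    have hsq : ∑ t ∈ Finset.range n, α t ^ 2 ≤ ∑' t, α t ^ 2 :=
      Summable.sum_le_tsum _ (fun t _ => sq_nonneg _) hα2
    calc ∑ t ∈ Finset.range n, α t * ∫ ω, h t ω ∂P
        ≤ ∑ t ∈ Finset.range n, (((∫ ω, f (x t ω) ∂P) - (∫ ω, f (x (t + 1) ω) ∂P)) +
            L / 2 * C * α t ^ 2) := Finset.sum_le_sum (fun t _ => hmain t)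
      _ = ((∫ ω, f (x 0 ω) ∂P) - (∫ ω, f (x n ω) ∂P)) +
            L / 2 * C * ∑ t ∈ Finset.range n, α t ^ 2 := by
          rw [Finset.sum_add_distrib, htel, Finset.mul_sum]
      _ ≤ (∫ ω, f (x 0 ω) ∂P) - fstar + L / 2 * C * ∑' t, α t ^ 2 := by
          have : L / 2 * C * ∑ t ∈ Finset.range n, α t ^ 2 ≤ L / 2 * C * ∑' t, α t ^ 2 :=
            mul_le_mul_of_nonneg_left hsq (by positivity)
          linarith
  -- a.e. summability
  have key : ∀ᵐ ω ∂P, Summable (fun t => α t * h t ω) := by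
    set G : ℕ → Ω → ENNReal := fun t ω => ENNReal.ofReal (α t * h t ω) with hG
    have hGm : ∀ t, Measurable (G t) := fun t =>
      ENNReal.measurable_ofReal.comp ((hh_meas t).const_mul (α t))
    have hlt : ∀ t, ∫⁻ ω, G t ω ∂P = ENNReal.ofReal (α t * ∫ ω, h t ω ∂P) := by
      intro t
      rw [← integral_const_mul]
      exact (ofReal_integral_eq_lintegral_ofReal ((hhint t).const_mul (α t))
        (Filter.Eventually.of_forall fun ω => mul_nonneg (hαpos t).le (hh_nonneg t ω))).symm
    have htsum : ∫⁻ ω, ∑' t, G t ω ∂P = ∑' t, ENNReal.ofReal (α t * ∫ ω, h t ω ∂P) := by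
      rw [lintegral_tsum (fun t => (hGm t).aemeasurable)]
      exact tsum_congr hlt
    have hfin : ∫⁻ ω, ∑' t, G t ω ∂P ≠ ⊤ := by
      rw [htsum, ← ENNReal.ofReal_tsum_of_nonneg
        (fun t => mul_nonneg (hαpos t).le (hInn t)) hsumI]
      exact ENNReal.ofReal_ne_top
    filter_upwards [ae_lt_top (by measurability) hfin] with ω hω
    have : Summable (fun t => (G t ω).toReal) :=
      ENNReal.summable_toReal (by
        intro hcon
        rw [hcon] at hω
        exact absurd hω (lt_irrefl _))
    refine this.congr (fun t => ?_)
    simp only [hG]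
    exact ENNReal.toReal_ofReal (mul_nonneg (hαpos t).le (hh_nonneg t ω))
  filter_upwards [key] with ω hω
  exact det_min' α (fun t => h t ω) hαpos (fun t => hh_nonneg t ω) hαns hω
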